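/- arXiv:1804.04968 — 5 statements merged into one kernel-verified Lean document; each statement's English description precedes it below -/
import Mathlib

section
/- Let φ ∈ FO(~,𝒟), let x̄ = (x_1,…,x_n) be a tuple of variables with Fr(φ) ⊆ x̄, and let T be a team in a τ-structure 𝒜 with domain Y ⊇ x̄. Then (𝒜,T) ⊨ φ (in team semantics) if and only if 𝒜 ⊨ η^{x̄}_φ(x̄⟨T⟩) (in classical second-order semantics). -/
set_option autoImplicit false

open Classical

/-! ## First-order vocabularies, structures, terms -/

/-- A first-order vocabulary: function symbols and relation symbols with arities. -/
structure Vocab : Type 1 where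
  Func : Type
  fArity : Func → ℕ
  Rel : Type
  rArity : Rel → ℕ

/-- A `τ`-structure (with nonempty domain, as usual in first-order logic). -/
structure Struc (τ : Vocab) : Type 1 where
  Dom : Type
  nonempty : Nonempty Dom
  funcs : ∀ f : τ.Func, (Fin (τ.fArity f) → Dom) → Dom
  rels : ∀ R : τ.Rel, (Fin (τ.rArity R) → Dom) → Prop

/-- `τ`-terms over the variables `ℕ`. -/
inductive Term (τ : Vocab) : Type where
  | var : ℕ → Term τ
  | app : (f : τ.Func) → (Fin (τ.fArity f) → Term τ) → Term τ

namespace Term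

variable {τ : Vocab}

/-- The set of variables occurring in a term. -/
def vars : Term τ → Set ℕ
  | .var x => {x}
  | .app _ ts => ⋃ i, (ts i).vars

/-- Evaluation of a term under a (total) assignment. -/
def eval (A : Struc τ) (s : ℕ → A.Dom) : Term τ → A.Dom
  | .var x => s x
  | .app f ts => A.funcs f fun i => (ts i).eval A s

/-- Size of a term. -/
def size : Term τ → ℕ
  | .var _ => 1
  | .app _ ts => 1 + ∑ i, (ts i).size

end Term

/-! ## Assignments and teams -/

/-- An assignment in `A` with domain `X`. -/
abbrev Assign {τ : Vocab} (A : Struc τ) (X : Set ℕ) : Type := X → A.Dom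

/-- A team in `A` with domain `X`: a set of assignments with domain `X`. -/
abbrev Team {τ : Vocab} (A : Struc τ) (X : Set ℕ) : Type := Set (Assign A X)

namespace Assign

variable {τ : Vocab} {A : Struc τ}

/-- Extend a partial assignment to a total one (junk values outside the domain). -/
noncomputable def toTotal {X : Set ℕ} (s : Assign A X) : ℕ → A.Dom :=
  fun n => if h : n ∈ X then s ⟨n, h⟩ else Classical.choice A.nonempty

/-- Restriction `s↾Y` of an assignment to a smaller domain. -/
def restrict {X Y : Set ℕ} (h : Y ⊆ X) (s : Assign A X) : Assign A Y :=
  fun y => s ⟨y.1, h y.2⟩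

/-- The supplemented assignment `s^x_a`, with domain `X ∪ {x}`, mapping `x` to `a`
and any other `y ∈ X` to `s y`. -/
def supp {X : Set ℕ} (s : Assign A X) (x : ℕ) (a : A.Dom) : Assign A (X ∪ {x}) :=
  fun y =>
    if h : (y : ℕ) = x then a
    else s ⟨y.1, by
      have hy := y.2
      simp only [Set.mem_union, Set.mem_singleton_iff] at hy
      exact hy.resolve_right h⟩

end Assign

namespace Team

variable {τ : Vocab} {A : Struc τ}

/-- Restriction `T↾Y` of a team to a smaller domain. -/
def restrict {X Y : Set ℕ} (h : Y ⊆ X) (T : Team A X) : Team A Y :=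
  Assign.restrict h '' T

/-- The supplemented team `T^x_f` for a (supplementing) function
`f` on assignments. -/
def supp {X : Set ℕ} (T : Team A X) (x : ℕ) (f : Assign A X → Set A.Dom) :
    Team A (X ∪ {x}) :=
  { t | ∃ s ∈ T, ∃ a ∈ f s, t = Assign.supp s x a }

end Team

/-- `t̄⟨T⟩`: the set of evaluations of the tuple of terms `ts` over a team `T`. -/
noncomputable def tupleEval {τ : Vocab} (A : Struc τ) {X : Set ℕ} {k : ℕ}
    (ts : Fin k → Term τ) (T : Team A X) : Set (Fin k → A.Dom) :=
  (fun s i => (ts i).eval A (Assign.toTotal s)) '' T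

/-! ## Classical first-order formulas (with equality) and Tarski semantics -/

inductive FOFormula (τ : Vocab) : Type where
  | rel : (R : τ.Rel) → (Fin (τ.rArity R) → Term τ) → FOFormula τ
  | eq : Term τ → Term τ → FOFormula τ
  | not : FOFormula τ → FOFormula τ
  | and : FOFormula τ → FOFormula τ → FOFormula τ
  | or : FOFormula τ → FOFormula τ → FOFormula τ
  | ex : ℕ → FOFormula τ → FOFormula τ
  | all : ℕ → FOFormula τ → FOFormula τ

namespace FOFormula

variable {τ : Vocab}

/-- Free variables. -/
def Fr : FOFormula τ → Set ℕ
  | .rel _ ts => ⋃ i, (ts i).vars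
  | .eq t u => t.vars ∪ u.vars
  | .not φ => φ.Fr
  | .and φ ψ => φ.Fr ∪ ψ.Fr
  | .or φ ψ => φ.Fr ∪ ψ.Fr
  | .ex x φ => φ.Fr \ {x}
  | .all x φ => φ.Fr \ {x}

/-- All variables (free and bound). -/
def vars : FOFormula τ → Set ℕ
  | .rel _ ts => ⋃ i, (ts i).vars
  | .eq t u => t.vars ∪ u.vars
  | .not φ => φ.vars
  | .and φ ψ => φ.vars ∪ ψ.vars
  | .or φ ψ => φ.vars ∪ ψ.vars
  | .ex x φ => insert x φ.vars
  | .all x φ => insert x φ.vars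

/-- Quantifier rank. -/
def qr : FOFormula τ → ℕ
  | .rel _ _ => 0
  | .eq _ _ => 0
  | .not φ => φ.qr
  | .and φ ψ => max φ.qr ψ.qr
  | .or φ ψ => max φ.qr ψ.qr
  | .ex _ φ => φ.qr + 1
  | .all _ φ => φ.qr + 1

/-- Size (length in a suitable encoding). -/
def size : FOFormula τ → ℕ
  | .rel _ ts => 1 + ∑ i, (ts i).size
  | .eq t u => 1 + t.size + u.size
  | .not φ => φ.size + 1
  | .and φ ψ => φ.size + ψ.size + 1
  | .or φ ψ => φ.size + ψ.size + 1
  | .ex _ φ => φ.size + 2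
  | .all _ φ => φ.size + 2

/-- Width: the number of distinct variables occurring in the formula. -/
noncomputable def width (φ : FOFormula τ) : ℕ := φ.vars.ncard

/-- Tarski satisfaction over total assignments. -/
def Sat (A : Struc τ) (s : ℕ → A.Dom) : FOFormula τ → Prop
  | .rel R ts => A.rels R fun i => (ts i).eval A s
  | .eq t u => t.eval A s = u.eval A s
  | .not φ => ¬ φ.Sat A s
  | .and φ ψ => φ.Sat A s ∧ ψ.Sat A s
  | .or φ ψ => φ.Sat A s ∨ ψ.Sat A s
  | .ex x φ => ∃ a : A.Dom, φ.Sat A (Function.update s x a)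
  | .all x φ => ∀ a : A.Dom, φ.Sat A (Function.update s x a)

end FOFormula

/-! ## Generalized dependencies -/

/-- The vocabulary with a single `k`-ary predicate. -/
def depVocab (k : ℕ) : Vocab where
  Func := Empty
  fArity := fun e => e.elim
  Rel := Unit
  rArity := fun _ => k

/-- A family of generalized dependencies: each index `i` has an arity `ar i` and a
first-order *sentence* over a single `ar i`-ary predicate. -/
structure DepFamily : Type 1 where
  idx : Type
  ar : idx → ℕ
  form : ∀ i : idx, FOFormula (depVocab (ar i))
  sentence : ∀ i : idx, (form i).Fr = ∅

/-- The `depVocab k`-structure with domain that of `A` interpreting the predicate as `S`. -/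
def depStruc {τ : Vocab} (A : Struc τ) {k : ℕ} (S : Set (Fin k → A.Dom)) :
    Struc (depVocab k) where
  Dom := A.Dom
  nonempty := A.nonempty
  funcs := fun f => f.elim
  rels := fun _ v => v ∈ S

/-- `A ⊨ δ(S)`: the dependency sentence `δ` holds in `(dom A, S)`. -/
def DepSat {τ : Vocab} (A : Struc τ) {k : ℕ} (δ : FOFormula (depVocab k))
    (S : Set (Fin k → A.Dom)) : Prop :=
  ∀ s : ℕ → A.Dom, δ.Sat (depStruc A S) s

/-! ## Team logic FO(~,𝒟) -/

inductive TFormula (τ : Vocab) (D : DepFamily) : Type where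
  | base : FOFormula τ → TFormula τ D
  | atom : (i : D.idx) → (Fin (D.ar i) → Term τ) → TFormula τ D
  | tnot : TFormula τ D → TFormula τ D
  | tand : TFormula τ D → TFormula τ D → TFormula τ D
  | tor : TFormula τ D → TFormula τ D → TFormula τ D
  | tex : ℕ → TFormula τ D → TFormula τ D
  | tall : ℕ → TFormula τ D → TFormula τ D

namespace TFormula

variable {τ : Vocab} {D : DepFamily}

/-- Free variables. -/
def Fr : TFormula τ D → Set ℕ
  | .base α => α.Fr
  | .atom _ ts => ⋃ i, (ts i).vars
  | .tnot φ => φ.Fr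
  | .tand φ ψ => φ.Fr ∪ ψ.Fr
  | .tor φ ψ => φ.Fr ∪ ψ.Fr
  | .tex x φ => φ.Fr \ {x}
  | .tall x φ => φ.Fr \ {x}

/-- All variables (free and bound). -/
def vars : TFormula τ D → Set ℕ
  | .base α => α.vars
  | .atom _ ts => ⋃ i, (ts i).vars
  | .tnot φ => φ.vars
  | .tand φ ψ => φ.vars ∪ ψ.vars
  | .tor φ ψ => φ.vars ∪ ψ.vars
  | .tex x φ => insert x φ.vars
  | .tall x φ => insert x φ.vars

/-- Quantifier rank. -/
def qr : TFormula τ D → ℕ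
  | .base _ => 0
  | .atom _ _ => 0
  | .tnot φ => φ.qr
  | .tand φ ψ => max φ.qr ψ.qr
  | .tor φ ψ => max φ.qr ψ.qr
  | .tex _ φ => φ.qr + 1
  | .tall _ φ => φ.qr + 1

/-- Size (length in a suitable encoding). -/
def size : TFormula τ D → ℕ
  | .base α => α.size
  | .atom _ ts => 1 + ∑ i, (ts i).size
  | .tnot φ => φ.size + 1
  | .tand φ ψ => φ.size + ψ.size + 1
  | .tor φ ψ => φ.size + ψ.size + 1
  | .tex _ φ => φ.size + 2
  | .tall _ φ => φ.size + 2

/-- Width: the number of distinct variables occurring in the formula. -/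
noncomputable def width (φ : TFormula τ D) : ℕ := φ.vars.ncard

end TFormula

/-- Team semantics of FO(~,𝒟). -/
def TSat {τ : Vocab} {D : DepFamily} (A : Struc τ) :
    TFormula τ D → (X : Set ℕ) → Team A X → Prop
  | .base α, _, T => ∀ s ∈ T, α.Sat A (Assign.toTotal s)
  | .atom i ts, _, T => DepSat A (D.form i) (tupleEval A ts T)
  | .tnot φ, X, T => ¬ TSat A φ X T
  | .tand φ ψ, X, T => TSat A φ X T ∧ TSat A ψ X T
  | .tor φ ψ, X, T => ∃ S U : Team A X, S ∪ U = T ∧ TSat A φ X S ∧ TSat A ψ X U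
  | .tex x φ, X, T => ∃ f : Assign A X → Set A.Dom,
      (∀ s ∈ T, (f s).Nonempty) ∧ TSat A φ (X ∪ {x}) (T.supp x f)
  | .tall x φ, X, T => TSat A φ (X ∪ {x}) (T.supp x fun _ => (Set.univ : Set A.Dom))

/-- Equivalence of team-logic formulas: same satisfying pairs `(A, T)`,
over all teams whose domain contains the free variables of both. -/
def TEquiv {τ : Vocab} {D : DepFamily} (φ ψ : TFormula τ D) : Prop :=
  ∀ (A : Struc τ) (X : Set ℕ), φ.Fr ∪ ψ.Fr ⊆ X →
    ∀ T : Team A X, TSat A φ X T ↔ TSat A ψ X T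

/-- The family of no dependencies at all: plain FO(~). -/
def emptyDeps : DepFamily where
  idx := Empty
  ar := fun e => e.elim
  form := fun e => e.elim
  sentence := fun e => e.elim

/-- `Eβ := ~¬β`. -/
def TFormula.E {τ : Vocab} {D : DepFamily} (β : FOFormula τ) : TFormula τ D :=
  .tnot (.base (.not β))

/-- Boolean disjunction `φ ⊻ ψ := ~(~φ ∧ ~ψ)`. -/
def TFormula.bdis {τ : Vocab} {D : DepFamily} (φ ψ : TFormula τ D) : TFormula τ D :=
  .tnot (.tand (.tnot φ) (.tnot ψ))

/-- Iterated splitting disjunction (nonempty list, head plus tail). -/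
def bigOr {τ : Vocab} {D : DepFamily} :
    TFormula τ D → List (TFormula τ D) → TFormula τ D
  | φ, [] => φ
  | φ, ψ :: l => .tor φ (bigOr ψ l)

/-- Iterated conjunction (nonempty list, head plus tail). -/
def bigAnd {τ : Vocab} {D : DepFamily} :
    TFormula τ D → List (TFormula τ D) → TFormula τ D
  | φ, [] => φ
  | φ, ψ :: l => .tand φ (bigAnd ψ l)

/-- Iterated Boolean disjunction (nonempty list, head plus tail). -/
def bigBdis {τ : Vocab} {D : DepFamily} :
    TFormula τ D → List (TFormula τ D) → TFormula τ D
  | φ, [] => φ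
  | φ, ψ :: l => TFormula.bdis φ (bigBdis ψ l)

/-- `⋁_{i=1}^{n+1} χ_i` (splitting disjunction). -/
def finBigOr {τ : Vocab} {D : DepFamily} {n : ℕ}
    (χ : Fin (n + 1) → TFormula τ D) : TFormula τ D :=
  bigOr (χ 0) (List.ofFn fun i : Fin n => χ i.succ)

/-- `⋀_{i=1}^{n+1} χ_i`. -/
def finBigAnd {τ : Vocab} {D : DepFamily} {n : ℕ}
    (χ : Fin (n + 1) → TFormula τ D) : TFormula τ D :=
  bigAnd (χ 0) (List.ofFn fun i : Fin n => χ i.succ)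

/-- The tower function: `expTower 0 m = m`, `expTower (k+1) m = 2 ^ expTower k m`. -/
def expTower : ℕ → ℕ → ℕ
  | 0, m => m
  | k + 1, m => 2 ^ expTower k m

/-! ## The second-order translation η (semantically) -/

/-- The tuple `x̄;y`: `x̄` itself if `y` occurs in `x̄`, and `x̄` extended by `y` otherwise. -/
noncomputable def semico {n : ℕ} (xs : Fin n → ℕ) (y : ℕ) : Σ m : ℕ, Fin m → ℕ :=
  if y ∈ Set.range xs then ⟨n, xs⟩ else ⟨n + 1, Fin.snoc xs y⟩

/-- `etaSem A φ n xs R` expresses `A ⊨ η^{x̄}_φ(R)`, i.e. the classical (second-order)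
semantics of the translation `η^{x̄}_φ` applied to the relation `R`. -/
def etaSem {τ : Vocab} {D : DepFamily} (A : Struc τ) :
    TFormula τ D → (n : ℕ) → (Fin n → ℕ) → Set (Fin n → A.Dom) → Prop
  | .base α, _, xs, R =>
      ∀ s : ℕ → A.Dom, (fun i => s (xs i)) ∈ R → α.Sat A s
  | .atom i ts, _, xs, R =>
      ∃ S : Set (Fin (D.ar i) → A.Dom),
        (∀ v : Fin (D.ar i) → A.Dom,
          v ∈ S ↔ ∃ s : ℕ → A.Dom,
            (fun j => s (xs j)) ∈ R ∧ (fun j => (ts j).eval A s) = v) ∧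
        DepSat A (D.form i) S
  | .tnot φ, n, xs, R => ¬ etaSem A φ n xs R
  | .tand φ ψ, n, xs, R => etaSem A φ n xs R ∧ etaSem A ψ n xs R
  | .tor φ ψ, n, xs, R =>
      ∃ S U : Set (Fin n → A.Dom),
        (∀ v, v ∈ R ↔ v ∈ S ∨ v ∈ U) ∧ etaSem A φ n xs S ∧ etaSem A ψ n xs U
  | .tex y φ, _, xs, R =>
      ∃ S : Set (Fin (semico xs y).1 → A.Dom),
        (∀ s : ℕ → A.Dom,
          (∃ b : A.Dom, (fun i => Function.update s y b (xs i)) ∈ R) ↔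
          (∃ b : A.Dom, (fun j => Function.update s y b ((semico xs y).2 j)) ∈ S)) ∧
        etaSem A φ (semico xs y).1 (semico xs y).2 S
  | .tall y φ, _, xs, R =>
      ∃ S : Set (Fin (semico xs y).1 → A.Dom),
        (∀ s : ℕ → A.Dom,
          (∃ b : A.Dom, (fun i => Function.update s y b (xs i)) ∈ R) ↔
          (∃ b : A.Dom, (fun j => Function.update s y b ((semico xs y).2 j)) ∈ S)) ∧
        etaSem A φ (semico xs y).1 (semico xs y).2 S ∧
        (∀ s : ℕ → A.Dom, (fun i => s (xs i)) ∈ R →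
          ∀ b : A.Dom, (fun j => Function.update s y b ((semico xs y).2 j)) ∈ S)

/-- `zetaSem A N φ n xs R` expresses `A ⊨ ζ^{x̄,p}_φ(R)` where `N = p(‖A‖)`: like
`etaSem`, but all second-order quantifiers are sparse, i.e. range only over relations
of cardinality at most `N`. -/
def zetaSem {τ : Vocab} {D : DepFamily} (A : Struc τ) (N : ℕ) :
    TFormula τ D → (n : ℕ) → (Fin n → ℕ) → Set (Fin n → A.Dom) → Prop
  | .base α, _, xs, R =>
      ∀ s : ℕ → A.Dom, (fun i => s (xs i)) ∈ R → α.Sat A s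
  | .atom i ts, _, xs, R =>
      ∃ S : Set (Fin (D.ar i) → A.Dom), S.Finite ∧ S.ncard ≤ N ∧
        (∀ v : Fin (D.ar i) → A.Dom,
          v ∈ S ↔ ∃ s : ℕ → A.Dom,
            (fun j => s (xs j)) ∈ R ∧ (fun j => (ts j).eval A s) = v) ∧
        DepSat A (D.form i) S
  | .tnot φ, n, xs, R => ¬ zetaSem A N φ n xs R
  | .tand φ ψ, n, xs, R => zetaSem A N φ n xs R ∧ zetaSem A N ψ n xs R
  | .tor φ ψ, n, xs, R =>
      ∃ S U : Set (Fin n → A.Dom), S.Finite ∧ S.ncard ≤ N ∧ U.Finite ∧ U.ncard ≤ N ∧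
        (∀ v, v ∈ R ↔ v ∈ S ∨ v ∈ U) ∧ zetaSem A N φ n xs S ∧ zetaSem A N ψ n xs U
  | .tex y φ, _, xs, R =>
      ∃ S : Set (Fin (semico xs y).1 → A.Dom), S.Finite ∧ S.ncard ≤ N ∧
        (∀ s : ℕ → A.Dom,
          (∃ b : A.Dom, (fun i => Function.update s y b (xs i)) ∈ R) ↔
          (∃ b : A.Dom, (fun j => Function.update s y b ((semico xs y).2 j)) ∈ S)) ∧
        zetaSem A N φ (semico xs y).1 (semico xs y).2 S
  | .tall y φ, _, xs, R =>
      ∃ S : Set (Fin (semico xs y).1 → A.Dom), S.Finite ∧ S.ncard ≤ N ∧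
        (∀ s : ℕ → A.Dom,
          (∃ b : A.Dom, (fun i => Function.update s y b (xs i)) ∈ R) ↔
          (∃ b : A.Dom, (fun j => Function.update s y b ((semico xs y).2 j)) ∈ S)) ∧
        zetaSem A N φ (semico xs y).1 (semico xs y).2 S ∧
        (∀ s : ℕ → A.Dom, (fun i => s (xs i)) ∈ R →
          ∀ b : A.Dom, (fun j => Function.update s y b ((semico xs y).2 j)) ∈ S)

/-- `‖A‖`: the size of a finite structure, i.e. the size of the domain plus the sizes of
the interpretations of all symbols of the vocabulary. -/
noncomputable def strucNorm {τ : Vocab} (A : Struc τ)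
    [Fintype τ.Rel] [Fintype τ.Func] : ℕ :=
  Nat.card A.Dom + (∑ R : τ.Rel, Set.ncard { v | A.rels R v }) +
    ∑ f : τ.Func, Nat.card A.Dom ^ τ.fArity f

/-! ## Modal team logic MTL -/

inductive MLFormula : Type where
  | prop : ℕ → MLFormula
  | neg : MLFormula → MLFormula
  | and : MLFormula → MLFormula → MLFormula
  | or : MLFormula → MLFormula → MLFormula
  | box : MLFormula → MLFormula
  | dia : MLFormula → MLFormula

inductive MTLFormula : Type where
  | base : MLFormula → MTLFormula
  | mnot : MTLFormula → MTLFormula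
  | mand : MTLFormula → MTLFormula → MTLFormula
  | mor : MTLFormula → MTLFormula → MTLFormula
  | mbox : MTLFormula → MTLFormula
  | mdia : MTLFormula → MTLFormula

/-- A Kripke structure (with nonempty set of worlds, as usual). -/
structure Kripke : Type 1 where
  W : Type
  nonempty : Nonempty W
  R : W → W → Prop
  V : ℕ → Set W

/-- Classical Kripke semantics of ML. -/
def MLFormula.Sat (K : Kripke) (w : K.W) : MLFormula → Prop
  | .prop i => w ∈ K.V i
  | .neg φ => ¬ φ.Sat K w
  | .and φ ψ => φ.Sat K w ∧ ψ.Sat K w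
  | .or φ ψ => φ.Sat K w ∨ ψ.Sat K w
  | .box φ => ∀ v, K.R w v → φ.Sat K v
  | .dia φ => ∃ v, K.R w v ∧ φ.Sat K v

/-- The image `RT` of a team. -/
def Kripke.img (K : Kripke) (T : Set K.W) : Set K.W := { v | ∃ w ∈ T, K.R w v }

/-- `S` is a successor team of `T`: `S ⊆ RT` and `T ⊆ R⁻¹S`. -/
def Kripke.SuccTeam (K : Kripke) (T S : Set K.W) : Prop :=
  S ⊆ K.img T ∧ ∀ w ∈ T, ∃ v ∈ S, K.R w v

/-- Team semantics of MTL. -/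
def MTLSat (K : Kripke) : MTLFormula → Set K.W → Prop
  | .base α, T => ∀ w ∈ T, α.Sat K w
  | .mnot φ, T => ¬ MTLSat K φ T
  | .mand φ ψ, T => MTLSat K φ T ∧ MTLSat K ψ T
  | .mor φ ψ, T => ∃ S U, S ∪ U = T ∧ MTLSat K φ S ∧ MTLSat K ψ U
  | .mbox φ, T => MTLSat K φ (K.img T)
  | .mdia φ, T => ∃ S, K.SuccTeam T S ∧ MTLSat K φ S

/-! ## The standard translation from MTL to FO²(~) -/

/-- The vocabulary `τ_M`: one binary predicate `R` (index `none`) and unary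
predicates `P_i` (index `some i`). -/
def tauM : Vocab where
  Func := Empty
  fArity := fun e => e.elim
  Rel := Option ℕ
  rArity := fun R => match R with
    | none => 2
    | some _ => 1

/-- The two first-order variables `x` (for `false`) and `y` (for `true`). -/
def vIdx : Bool → ℕ
  | false => 0
  | true => 1

/-- The atom `R a b`. -/
def rAtom (a b : ℕ) : FOFormula tauM :=
  .rel none fun i => if (i : ℕ) = 0 then Term.var a else Term.var b

/-- The atom `P_i v`. -/
def pAtom (i v : ℕ) : FOFormula tauM :=
  .rel (some i) fun _ => Term.var v

/-- The standard translation of classical modal logic ML into FO². -/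
def STml : Bool → MLFormula → FOFormula tauM
  | v, .prop i => pAtom i (vIdx v)
  | v, .neg α => .not (STml v α)
  | v, .and α β => .and (STml v α) (STml v β)
  | v, .or α β => .or (STml v α) (STml v β)
  | v, .dia α => .ex (vIdx !v) (.and (rAtom (vIdx v) (vIdx !v)) (STml (!v) α))
  | v, .box α => .all (vIdx !v) (.or (.not (rAtom (vIdx v) (vIdx !v))) (STml (!v) α))

/-- The standard translation of MTL into FO²(~);
`st_x` is `ST false` and `st_y` is `ST true`. -/
def stt : Bool → MTLFormula → TFormula tauM emptyDeps
  | v, .base α => .base (STml v α)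
  | v, .mnot φ => .tnot (stt v φ)
  | v, .mand φ ψ => .tand (stt v φ) (stt v ψ)
  | v, .mor φ ψ => .tor (stt v φ) (stt v ψ)
  | v, .mdia φ => .tex (vIdx !v) (.tand (.base (rAtom (vIdx v) (vIdx !v))) (stt (!v) φ))
  | v, .mbox φ => .tall (vIdx !v)
      (.tor (.base (.not (rAtom (vIdx v) (vIdx !v))))
            (.tand (.base (rAtom (vIdx v) (vIdx !v))) (stt (!v) φ)))

/-- The first-order interpretation `𝒜(K)` of a Kripke structure. -/
def AK (K : Kripke) : Struc tauM where
  Dom := K.W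
  nonempty := K.nonempty
  funcs := fun f => f.elim
  rels := fun R => match R with
    | none => fun v => K.R (v ⟨0, Nat.zero_lt_two⟩) (v ⟨1, Nat.one_lt_two⟩)
    | some i => fun v => v ⟨0, Nat.zero_lt_one⟩ ∈ K.V i

/-- `T^x`: the team of first-order assignments `w^x` for `w ∈ T`. -/
def teamX (K : Kripke) (T : Set K.W) : Team (AK K) ({0} : Set ℕ) :=
  { s | ∃ w ∈ T, s = fun _ => w }

section Aux

variable {τ : Vocab} {D : DepFamily}

lemma Term.eval_congr (A : Struc τ) (t : Term τ) {s s' : ℕ → A.Dom}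
    (h : ∀ x ∈ t.vars, s x = s' x) : t.eval A s = t.eval A s' := by
  induction t with
  | var x => exact h x rfl
  | app f ts ih =>
      simp only [Term.eval]
      congr 1
      funext i
      exact ih i fun x hx => h x (Set.mem_iUnion.2 ⟨i, hx⟩)

lemma FOFormula.sat_congr (A : Struc τ) (α : FOFormula τ) {s s' : ℕ → A.Dom}
    (h : ∀ x ∈ α.Fr, s x = s' x) : α.Sat A s ↔ α.Sat A s' := by
  induction α generalizing s s' with
  | rel R ts =>
      simp only [FOFormula.Sat]
      constructor <;> intro hs <;>
        [rw [show (fun i => (ts i).eval A s') = fun i => (ts i).eval A s from ?_];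
         rw [show (fun i => (ts i).eval A s) = fun i => (ts i).eval A s' from ?_]] <;>
        first
          | exact hs
          | · funext i
              exact (Term.eval_congr A (ts i) fun x hx => h x (Set.mem_iUnion.2 ⟨i, hx⟩)) ▸ rfl
  | eq t u =>
      simp only [FOFormula.Sat]
      rw [Term.eval_congr A t fun x hx => h x (Or.inl hx),
        Term.eval_congr A u fun x hx => h x (Or.inr hx)]
  | not φ ih => exact not_congr (ih h)
  | and φ ψ ihφ ihψ =>
      exact and_congr (ihφ fun x hx => h x (Or.inl hx)) (ihψ fun x hx => h x (Or.inr hx))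
  | or φ ψ ihφ ihψ =>
      exact or_congr (ihφ fun x hx => h x (Or.inl hx)) (ihψ fun x hx => h x (Or.inr hx))
  | ex x φ ih =>
      refine exists_congr fun a => ih fun z hz => ?_
      by_cases hzx : z = x
      · subst hzx; simp
      · simp only [Function.update_of_ne hzx]; exact h z ⟨hz, hzx⟩
  | all x φ ih =>
      refine forall_congr' fun a => ih fun z hz => ?_
      by_cases hzx : z = x
      · subst hzx; simp
      · simp only [Function.update_of_ne hzx]; exact h z ⟨hz, hzx⟩

lemma Assign.toTotal_supp {A : Struc τ} {Y : Set ℕ} (t : Assign A Y) (y : ℕ) (a : A.Dom) :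
    Assign.toTotal (Assign.supp t y a) = Function.update (Assign.toTotal t) y a := by
  funext z
  by_cases hz : z = y
  · subst hz
    simp [Assign.toTotal, Assign.supp]
  · rw [Function.update_of_ne hz]
    by_cases hzY : z ∈ Y
    · simp [Assign.toTotal, Assign.supp, hz, hzY]
    · have : z ∉ Y ∪ ({y} : Set ℕ) := by
        simp [hzY, hz]
      simp only [Assign.toTotal, dif_neg hzY, dif_neg this]

end Aux

section EtaCongr

variable {τ : Vocab} {D : DepFamily}

lemma etaSem_congr (A : Struc τ) (φ : TFormula τ D) :
    ∀ (n : ℕ) (xs : Fin n → ℕ) (R R' : Set (Fin n → A.Dom)),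
    (∀ s : ℕ → A.Dom, (fun i => s (xs i)) ∈ R ↔ (fun i => s (xs i)) ∈ R') →
    (etaSem A φ n xs R ↔ etaSem A φ n xs R') := by
  induction φ with
  | base α =>
      intro n xs R R' h
      simp only [etaSem]
      exact forall_congr' fun s => imp_congr_left (h s)
  | atom i ts =>
      intro n xs R R' h
      simp only [etaSem]
      refine exists_congr fun S => and_congr_left' (forall_congr' fun v => ?_)
      exact iff_congr Iff.rfl (exists_congr fun s => and_congr_left' (h s))
  | tnot φ ih =>
      intro n xs R R' h
      simp only [etaSem]
      exact not_congr (ih n xs R R' h)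
  | tand φ ψ ihφ ihψ =>
      intro n xs R R' h
      simp only [etaSem]
      exact and_congr (ihφ n xs R R' h) (ihψ n xs R R' h)
  | tor φ ψ ihφ ihψ =>
      intro n xs R R' h
      simp only [etaSem]
      constructor
      · rintro ⟨S, U, hSU, hφ, hψ⟩
        set C : Set (Fin n → A.Dom) := Set.range (fun s : ℕ → A.Dom => fun i => s (xs i))
          with hC
        refine ⟨(S ∩ C) ∪ (R' \ C), U ∩ C, fun v => ?_, ?_, ?_⟩
        · by_cases hv : v ∈ C
          · obtain ⟨s, rfl⟩ := hv
            have hsC : (fun i => s (xs i)) ∈ C := ⟨s, rfl⟩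
            constructor
            · intro hvR'
              rcases (hSU _).1 ((h s).2 hvR') with hS | hU
              · exact Or.inl (Or.inl ⟨hS, hsC⟩)
              · exact Or.inr ⟨hU, hsC⟩
            · rintro ((⟨hS, -⟩ | ⟨hR', -⟩) | ⟨hU, -⟩)
              · exact (h s).1 ((hSU _).2 (Or.inl hS))
              · exact hR'
              · exact (h s).1 ((hSU _).2 (Or.inr hU))
          · constructor
            · intro hvR'
              exact Or.inl (Or.inr ⟨hvR', hv⟩)
            · rintro ((⟨-, hvC⟩ | ⟨hR', -⟩) | ⟨-, hvC⟩)
              · exact absurd hvC hv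
              · exact hR'
              · exact absurd hvC hv
        · refine (ihφ n xs S _ fun s => ?_).1 hφ
          have hsC : (fun i => s (xs i)) ∈ C := ⟨s, rfl⟩
          constructor
          · intro hS; exact Or.inl ⟨hS, hsC⟩
          · rintro (⟨hS, -⟩ | ⟨-, hvC⟩)
            · exact hS
            · exact absurd hsC hvC
        · refine (ihψ n xs U _ fun s => ?_).1 hψ
          have hsC : (fun i => s (xs i)) ∈ C := ⟨s, rfl⟩
          exact ⟨fun hU => ⟨hU, hsC⟩, fun hU => hU.1⟩
      · rintro ⟨S, U, hSU, hφ, hψ⟩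
        set C : Set (Fin n → A.Dom) := Set.range (fun s : ℕ → A.Dom => fun i => s (xs i))
          with hC
        refine ⟨(S ∩ C) ∪ (R \ C), U ∩ C, fun v => ?_, ?_, ?_⟩
        · by_cases hv : v ∈ C
          · obtain ⟨s, rfl⟩ := hv
            have hsC : (fun i => s (xs i)) ∈ C := ⟨s, rfl⟩
            constructor
            · intro hvR
              rcases (hSU _).1 ((h s).1 hvR) with hS | hU
              · exact Or.inl (Or.inl ⟨hS, hsC⟩)
              · exact Or.inr ⟨hU, hsC⟩
            · rintro ((⟨hS, -⟩ | ⟨hR, -⟩) | ⟨hU, -⟩)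
              · exact (h s).2 ((hSU _).2 (Or.inl hS))
              · exact hR
              · exact (h s).2 ((hSU _).2 (Or.inr hU))
          · constructor
            · intro hvR
              exact Or.inl (Or.inr ⟨hvR, hv⟩)
            · rintro ((⟨-, hvC⟩ | ⟨hR, -⟩) | ⟨-, hvC⟩)
              · exact absurd hvC hv
              · exact hR
              · exact absurd hvC hv
        · refine (ihφ n xs S _ fun s => ?_).1 hφ
          have hsC : (fun i => s (xs i)) ∈ C := ⟨s, rfl⟩
          constructor
          · intro hS; exact Or.inl ⟨hS, hsC⟩
          · rintro (⟨hS, -⟩ | ⟨-, hvC⟩)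
            · exact hS
            · exact absurd hsC hvC
        · refine (ihψ n xs U _ fun s => ?_).1 hψ
          have hsC : (fun i => s (xs i)) ∈ C := ⟨s, rfl⟩
          exact ⟨fun hU => ⟨hU, hsC⟩, fun hU => hU.1⟩
  | tex y φ ih =>
      intro n xs R R' h
      simp only [etaSem]
      refine exists_congr fun S => and_congr_left' (forall_congr' fun s => ?_)
      refine iff_congr (exists_congr fun b => ?_) Iff.rfl
      exact h (Function.update s y b)
  | tall y φ ih =>
      intro n xs R R' h
      simp only [etaSem]
      refine exists_congr fun S => ?_
      refine and_congr (forall_congr' fun s => iff_congr (exists_congr fun b =>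
        h (Function.update s y b)) Iff.rfl) (and_congr Iff.rfl ?_)
      exact forall_congr' fun s => imp_congr_left (h s)

end EtaCongr

section Main

variable {τ : Vocab} {D : DepFamily}

/-- The relation `x̄⟨T⟩` determined by a team. -/
def teamRel {A : Struc τ} {Y : Set ℕ} (T : Team A Y) {n : ℕ} (xs : Fin n → ℕ) :
    Set (Fin n → A.Dom) :=
  { v | ∃ t ∈ T, (fun i => Assign.toTotal t (xs i)) = v }

lemma semico_pos {n : ℕ} {xs : Fin n → ℕ} {y : ℕ} (hy : y ∈ Set.range xs) :
    semico xs y = ⟨n, xs⟩ := by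
  simp [semico, hy]

lemma semico_neg {n : ℕ} {xs : Fin n → ℕ} {y : ℕ} (hy : y ∉ Set.range xs) :
    semico xs y = ⟨n + 1, Fin.snoc xs y⟩ := by
  simp [semico, hy]

lemma range_snoc {n : ℕ} (xs : Fin n → ℕ) (y : ℕ) :
    Set.range (Fin.snoc xs y : Fin (n+1) → ℕ) = Set.range xs ∪ {y} := by
  ext z
  simp only [Set.mem_range, Set.mem_union, Set.mem_singleton_iff]
  constructor
  · rintro ⟨j, rfl⟩
    induction j using Fin.lastCases with
    | last => right; simp
    | cast j => left; exact ⟨j, by simp⟩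
  · rintro (⟨j, rfl⟩ | rfl)
    · exact ⟨j.castSucc, by simp⟩
    · exact ⟨Fin.last n, by simp⟩

lemma snoc_tuple_eq {α : Type} {n : ℕ} (xs : Fin n → ℕ) (y : ℕ) (g h : ℕ → α) :
    (fun j => g ((Fin.snoc xs y : Fin (n+1) → ℕ) j)) =
      (fun j => h ((Fin.snoc xs y : Fin (n+1) → ℕ) j)) ↔
      (∀ i, g (xs i) = h (xs i)) ∧ g y = h y := by
  constructor
  · intro he
    constructor
    · intro i
      have := congrFun he (Fin.castSucc i)
      simpa [Fin.snoc_castSucc] using this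
    · have := congrFun he (Fin.last n)
      simpa [Fin.snoc_last] using this
  · rintro ⟨h1, h2⟩
    funext j
    induction j using Fin.lastCases with
    | last => simpa [Fin.snoc_last] using h2
    | cast j => simpa [Fin.snoc_castSucc] using h1 j


lemma snoc_tuple_eq_of {α : Type} {n : ℕ} (xs : Fin n → ℕ) (y : ℕ) (g h : ℕ → α)
    (h1 : ∀ i, g (xs i) = h (xs i)) (h2 : g y = h y) :
    (fun j => g ((Fin.snoc xs y : Fin (n+1) → ℕ) j)) =
      fun j => h ((Fin.snoc xs y : Fin (n+1) → ℕ) j) := by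
  funext j
  induction j using Fin.lastCases with
  | last => simpa [Fin.snoc_last] using h2
  | cast j => simpa [Fin.snoc_castSucc] using h1 j


lemma snoc_tuple_eq' {α : Type} {n : ℕ} (xs : Fin n → ℕ) (y : ℕ) (g h : ℕ → α)
    (he : (fun j => g ((Fin.snoc xs y : Fin (n+1) → ℕ) j)) =
      fun j => h ((Fin.snoc xs y : Fin (n+1) → ℕ) j)) :
    (∀ i, g (xs i) = h (xs i)) ∧ g y = h y := by
  constructor
  · intro i
    have h2 := congrFun he (Fin.castSucc i)
    simpa only [Fin.snoc_castSucc] using h2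
  · have h2 := congrFun he (Fin.last n)
    simpa only [Fin.snoc_last] using h2

lemma statement5_core (A : Struc τ) (φ : TFormula τ D) :
    ∀ (n : ℕ) (xs : Fin n → ℕ), φ.Fr ⊆ Set.range xs →
    ∀ (Y : Set ℕ), Set.range xs ⊆ Y → ∀ T : Team A Y,
    TSat A φ Y T ↔ etaSem A φ n xs (teamRel T xs) := by
  induction φ with
  | base α =>
      intro n xs hfr Y hY T
      simp only [TSat, etaSem]
      constructor
      · rintro h s ⟨t, ht, hts⟩
        refine (FOFormula.sat_congr A α fun x hx => ?_).1 (h t ht)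
        obtain ⟨i, rfl⟩ := hfr hx
        exact congrFun hts i
      · intro h t ht
        exact h (Assign.toTotal t) ⟨t, ht, rfl⟩
  | atom i ts =>
      intro n xs hfr Y hY T
      simp only [TSat, etaSem]
      have key : tupleEval A ts T =
          { v | ∃ s : ℕ → A.Dom, (fun j => s (xs j)) ∈ teamRel T xs ∧
            (fun j => (ts j).eval A s) = v } := by
        ext v
        simp only [tupleEval, Set.mem_image, Set.mem_setOf_eq]
        constructor
        · rintro ⟨t, ht, rfl⟩
          exact ⟨Assign.toTotal t, ⟨t, ht, rfl⟩, rfl⟩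
        · rintro ⟨s, ⟨t, ht, hts⟩, rfl⟩
          refine ⟨t, ht, ?_⟩
          funext j
          refine Term.eval_congr A (ts j) fun x hx => ?_
          obtain ⟨i', rfl⟩ := hfr (Set.mem_iUnion.2 ⟨j, hx⟩)
          exact congrFun hts i'
      constructor
      · intro h
        exact ⟨tupleEval A ts T, fun v => by rw [key]; rfl, h⟩
      · rintro ⟨S, hS, hsat⟩
        have : S = tupleEval A ts T := by
          rw [key]; ext v; exact hS v
        rwa [this] at hsat
  | tnot φ ih =>
      intro n xs hfr Y hY T
      simp only [TSat, etaSem]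
      exact not_congr (ih n xs hfr Y hY T)
  | tand φ ψ ihφ ihψ =>
      intro n xs hfr Y hY T
      simp only [TSat, etaSem]
      exact and_congr (ihφ n xs (fun x hx => hfr (Or.inl hx)) Y hY T)
        (ihψ n xs (fun x hx => hfr (Or.inr hx)) Y hY T)
  | tor φ ψ ihφ ihψ =>
      intro n xs hfr Y hY T
      have hfrφ : φ.Fr ⊆ Set.range xs := fun x hx => hfr (Or.inl hx)
      have hfrψ : ψ.Fr ⊆ Set.range xs := fun x hx => hfr (Or.inr hx)
      simp only [TSat, etaSem]
      constructor
      · rintro ⟨S, U, rfl, hS, hU⟩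
        refine ⟨teamRel S xs, teamRel U xs, fun v => ?_, (ihφ n xs hfrφ Y hY S).1 hS,
          (ihψ n xs hfrψ Y hY U).1 hU⟩
        constructor
        · rintro ⟨t, (ht | ht), rfl⟩
          · exact Or.inl ⟨t, ht, rfl⟩
          · exact Or.inr ⟨t, ht, rfl⟩
        · rintro (⟨t, ht, rfl⟩ | ⟨t, ht, rfl⟩)
          · exact ⟨t, Or.inl ht, rfl⟩
          · exact ⟨t, Or.inr ht, rfl⟩
      · rintro ⟨S, U, hSU, hS, hU⟩
        refine ⟨{ t ∈ T | (fun i => Assign.toTotal t (xs i)) ∈ S },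
          { t ∈ T | (fun i => Assign.toTotal t (xs i)) ∈ U }, ?_, ?_, ?_⟩
        · ext t
          constructor
          · rintro (⟨ht, -⟩ | ⟨ht, -⟩) <;> exact ht
          · intro ht
            rcases (hSU _).1 ⟨t, ht, rfl⟩ with h | h
            · exact Or.inl ⟨ht, h⟩
            · exact Or.inr ⟨ht, h⟩
        · refine (ihφ n xs hfrφ Y hY _).2 ((etaSem_congr A φ n xs S _ fun s => ?_).1 hS)
          constructor
          · intro hs
            obtain ⟨t, ht, hts⟩ := (hSU _).2 (Or.inl hs)
            exact ⟨t, ⟨ht, hts ▸ hs⟩, hts⟩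
          · rintro ⟨t, ⟨ht, htS⟩, hts⟩
            exact hts ▸ htS
        · refine (ihψ n xs hfrψ Y hY _).2 ((etaSem_congr A ψ n xs U _ fun s => ?_).1 hU)
          constructor
          · intro hs
            obtain ⟨t, ht, hts⟩ := (hSU _).2 (Or.inr hs)
            exact ⟨t, ⟨ht, hts ▸ hs⟩, hts⟩
          · rintro ⟨t, ⟨ht, htU⟩, hts⟩
            exact hts ▸ htU
  | tex y φ ih =>
      intro n xs hfr Y hY T
      simp only [TSat, etaSem]
      by_cases hy : y ∈ Set.range xs
      · rw [semico_pos hy]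
        dsimp only
        have hfrφ : φ.Fr ⊆ Set.range xs := fun x hx => by
          by_cases hxy : x = y
          · exact hxy ▸ hy
          · exact hfr ⟨hx, hxy⟩
        have hY' : Set.range xs ⊆ Y ∪ {y} := hY.trans Set.subset_union_left
        have IH := ih n xs hfrφ (Y ∪ {y}) hY'
        constructor
        · rintro ⟨f, hne, hsat⟩
          refine ⟨teamRel (T.supp y f) xs, fun s => ?_, (IH _).1 hsat⟩
          constructor
          · rintro ⟨b, t, ht, hts⟩
            obtain ⟨a, ha⟩ := hne t ht
            refine ⟨a, Assign.supp t y a, ⟨t, ht, a, ha, rfl⟩, ?_⟩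
            funext i
            rw [Assign.toTotal_supp]
            by_cases hxi : xs i = y
            · rw [hxi, Function.update_self, Function.update_self]
            · rw [Function.update_of_ne hxi, Function.update_of_ne hxi]
              have h2 := congrFun hts i
              rwa [Function.update_of_ne hxi] at h2
          · rintro ⟨b, t', ⟨t, ht, a, ha, rfl⟩, hts⟩
            refine ⟨Assign.toTotal t y, t, ht, ?_⟩
            funext i
            by_cases hxi : xs i = y
            · rw [hxi, Function.update_self]
            · rw [Function.update_of_ne hxi]
              have h2 := congrFun hts i
              rw [Assign.toTotal_supp, Function.update_of_ne hxi,
                Function.update_of_ne hxi] at h2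
              exact h2
        · rintro ⟨S, hcond, hS⟩
          refine ⟨fun t => { a | (fun j => Function.update (Assign.toTotal t) y a (xs j)) ∈ S },
            ?_, ?_⟩
          · intro t ht
            have h1 : ∃ b, (fun i => Function.update (Assign.toTotal t) y b (xs i))
                ∈ teamRel T xs := by
              refine ⟨Assign.toTotal t y, t, ht, ?_⟩
              simp only [Function.update_eq_self]
            obtain ⟨b, hb⟩ := (hcond (Assign.toTotal t)).1 h1
            exact ⟨b, hb⟩
          · refine (IH _).2 ((etaSem_congr A φ n xs S _ fun s => ?_).1 hS)
            constructor
            · intro hs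
              have hrhs : ∃ b, (fun j => Function.update s y b (xs j)) ∈ S :=
                ⟨s y, by simpa only [Function.update_eq_self] using hs⟩
              obtain ⟨b, t, ht, hts⟩ := (hcond s).2 hrhs
              have key : (fun j => Function.update (Assign.toTotal t) y (s y) (xs j))
                  = fun j => s (xs j) := by
                funext j
                by_cases hxj : xs j = y
                · rw [hxj, Function.update_self]
                · rw [Function.update_of_ne hxj]
                  have h2 := congrFun hts j
                  rwa [Function.update_of_ne hxj] at h2
              refine ⟨Assign.supp t y (s y), ⟨t, ht, s y, ?_, rfl⟩, ?_⟩
              · show (fun j => Function.update (Assign.toTotal t) y (s y) (xs j)) ∈ S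
                rw [key]; exact hs
              · funext j
                rw [Assign.toTotal_supp]
                exact congrFun key j
            · rintro ⟨t', ⟨t, ht, a, ha, rfl⟩, hts⟩
              rw [← hts, Assign.toTotal_supp]
              exact ha
      · rw [semico_neg hy]
        dsimp only
        have hxsne : ∀ i, xs i ≠ y := fun i h => hy ⟨i, h⟩
        have hfrφ : φ.Fr ⊆ Set.range (Fin.snoc xs y : Fin (n+1) → ℕ) := by
          rw [range_snoc]
          intro x hx
          by_cases hxy : x = y
          · exact Or.inr hxy
          · exact Or.inl (hfr ⟨hx, hxy⟩)
        have hY' : Set.range (Fin.snoc xs y : Fin (n+1) → ℕ) ⊆ Y ∪ {y} := by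
          rw [range_snoc]
          exact Set.union_subset_union_left _ hY
        have IH := ih (n+1) (Fin.snoc xs y) hfrφ (Y ∪ {y}) hY'
        constructor
        · rintro ⟨f, hne, hsat⟩
          refine ⟨teamRel (T.supp y f) (Fin.snoc xs y), fun s => ?_, (IH _).1 hsat⟩
          constructor
          · rintro ⟨b, t, ht, hts⟩
            obtain ⟨a, ha⟩ := hne t ht
            have hagree : ∀ i, Assign.toTotal t (xs i) = s (xs i) := by
              intro i
              have h2 := congrFun hts i
              rwa [Function.update_of_ne (hxsne i)] at h2
            refine ⟨a, Assign.supp t y a, ⟨t, ht, a, ha, rfl⟩, ?_⟩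
            refine snoc_tuple_eq_of xs y (Assign.toTotal (Assign.supp t y a))
              (Function.update s y a) (fun i => ?_) ?_
            · rw [Assign.toTotal_supp, Function.update_of_ne (hxsne i),
                Function.update_of_ne (hxsne i)]
              exact hagree i
            · rw [Assign.toTotal_supp, Function.update_self, Function.update_self]
          · rintro ⟨b, t', ⟨t, ht, a, ha, rfl⟩, hts⟩
            obtain ⟨hcs, -⟩ := snoc_tuple_eq' xs y (Assign.toTotal (Assign.supp t y a))
              (Function.update s y b) hts
            refine ⟨b, t, ht, ?_⟩
            funext i
            rw [Function.update_of_ne (hxsne i)]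
            have h2 := hcs i
            rwa [Assign.toTotal_supp, Function.update_of_ne (hxsne i),
              Function.update_of_ne (hxsne i)] at h2
        · rintro ⟨S, hcond, hS⟩
          refine ⟨fun t => { a | (fun j =>
              Function.update (Assign.toTotal t) y a
                ((Fin.snoc xs y : Fin (n+1) → ℕ) j)) ∈ S }, ?_, ?_⟩
          · intro t ht
            have h1 : ∃ b, (fun i => Function.update (Assign.toTotal t) y b (xs i))
                ∈ teamRel T xs := by
              refine ⟨Assign.toTotal t y, t, ht, ?_⟩
              simp only [Function.update_eq_self]
            obtain ⟨b, hb⟩ := (hcond (Assign.toTotal t)).1 h1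
            exact ⟨b, hb⟩
          · refine (IH _).2 ((etaSem_congr A φ (n+1) (Fin.snoc xs y) S _ fun s => ?_).1 hS)
            constructor
            · intro hs
              have hrhs : ∃ b, (fun j => Function.update s y b
                  ((Fin.snoc xs y : Fin (n+1) → ℕ) j)) ∈ S :=
                ⟨s y, by simpa only [Function.update_eq_self] using hs⟩
              obtain ⟨b, t, ht, hts⟩ := (hcond s).2 hrhs
              have hagree : ∀ i, Assign.toTotal t (xs i) = s (xs i) := by
                intro i
                have h2 := congrFun hts i
                rwa [Function.update_of_ne (hxsne i)] at h2
              have key : (fun j => Function.update (Assign.toTotal t) y (s y)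
                  ((Fin.snoc xs y : Fin (n+1) → ℕ) j))
                  = fun j => s ((Fin.snoc xs y : Fin (n+1) → ℕ) j) := by
                refine snoc_tuple_eq_of xs y (Function.update (Assign.toTotal t) y (s y)) s
                  (fun i => ?_) (by rw [Function.update_self])
                rw [Function.update_of_ne (hxsne i)]
                exact hagree i
              refine ⟨Assign.supp t y (s y), ⟨t, ht, s y, ?_, rfl⟩, ?_⟩
              · show (fun j => Function.update (Assign.toTotal t) y (s y)
                    ((Fin.snoc xs y : Fin (n+1) → ℕ) j)) ∈ S
                rw [key]; exact hs
              · rw [Assign.toTotal_supp]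
                exact key
            · rintro ⟨t', ⟨t, ht, a, ha, rfl⟩, hts⟩
              rw [← hts, Assign.toTotal_supp]
              exact ha
  | tall y φ ih =>
      intro n xs hfr Y hY T
      simp only [TSat, etaSem]
      by_cases hy : y ∈ Set.range xs
      · rw [semico_pos hy]
        dsimp only
        have hfrφ : φ.Fr ⊆ Set.range xs := fun x hx => by
          by_cases hxy : x = y
          · exact hxy ▸ hy
          · exact hfr ⟨hx, hxy⟩
        have hY' : Set.range xs ⊆ Y ∪ {y} := hY.trans Set.subset_union_left
        have IH := ih n xs hfrφ (Y ∪ {y}) hY'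
        constructor
        · intro hsat
          refine ⟨teamRel (T.supp y fun _ => Set.univ) xs, fun s => ?_, (IH _).1 hsat, ?_⟩
          · constructor
            · rintro ⟨b, t, ht, hts⟩
              refine ⟨b, Assign.supp t y b, ⟨t, ht, b, Set.mem_univ b, rfl⟩, ?_⟩
              funext i
              rw [Assign.toTotal_supp]
              by_cases hxi : xs i = y
              · rw [hxi, Function.update_self, Function.update_self]
              · rw [Function.update_of_ne hxi, Function.update_of_ne hxi]
                have h2 := congrFun hts i
                rwa [Function.update_of_ne hxi] at h2
            · rintro ⟨b, t', ⟨t, ht, a, -, rfl⟩, hts⟩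
              refine ⟨Assign.toTotal t y, t, ht, ?_⟩
              funext i
              by_cases hxi : xs i = y
              · rw [hxi, Function.update_self]
              · rw [Function.update_of_ne hxi]
                have h2 := congrFun hts i
                rw [Assign.toTotal_supp, Function.update_of_ne hxi,
                  Function.update_of_ne hxi] at h2
                exact h2
          · rintro s ⟨t, ht, hts⟩ b
            refine ⟨Assign.supp t y b, ⟨t, ht, b, Set.mem_univ b, rfl⟩, ?_⟩
            funext i
            rw [Assign.toTotal_supp]
            by_cases hxi : xs i = y
            · rw [hxi, Function.update_self, Function.update_self]
            · rw [Function.update_of_ne hxi, Function.update_of_ne hxi]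
              exact congrFun hts i
        · rintro ⟨S, hcond, hS, hall⟩
          refine (IH _).2 ((etaSem_congr A φ n xs S _ fun s => ?_).1 hS)
          constructor
          · intro hs
            have hrhs : ∃ b, (fun j => Function.update s y b (xs j)) ∈ S :=
              ⟨s y, by simpa only [Function.update_eq_self] using hs⟩
            obtain ⟨b, t, ht, hts⟩ := (hcond s).2 hrhs
            refine ⟨Assign.supp t y (s y), ⟨t, ht, s y, Set.mem_univ _, rfl⟩, ?_⟩
            funext j
            rw [Assign.toTotal_supp]
            by_cases hxj : xs j = y
            · rw [hxj, Function.update_self]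
            · rw [Function.update_of_ne hxj]
              have h2 := congrFun hts j
              rwa [Function.update_of_ne hxj] at h2
          · rintro ⟨t', ⟨t, ht, a, -, rfl⟩, hts⟩
            rw [← hts, Assign.toTotal_supp]
            exact hall (Assign.toTotal t) ⟨t, ht, rfl⟩ a
      · rw [semico_neg hy]
        dsimp only
        have hxsne : ∀ i, xs i ≠ y := fun i h => hy ⟨i, h⟩
        have hfrφ : φ.Fr ⊆ Set.range (Fin.snoc xs y : Fin (n+1) → ℕ) := by
          rw [range_snoc]
          intro x hx
          by_cases hxy : x = y
          · exact Or.inr hxy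
          · exact Or.inl (hfr ⟨hx, hxy⟩)
        have hY' : Set.range (Fin.snoc xs y : Fin (n+1) → ℕ) ⊆ Y ∪ {y} := by
          rw [range_snoc]
          exact Set.union_subset_union_left _ hY
        have IH := ih (n+1) (Fin.snoc xs y) hfrφ (Y ∪ {y}) hY'
        constructor
        · intro hsat
          refine ⟨teamRel (T.supp y fun _ => Set.univ) (Fin.snoc xs y), fun s => ?_,
            (IH _).1 hsat, ?_⟩
          · constructor
            · rintro ⟨b, t, ht, hts⟩
              have hagree : ∀ i, Assign.toTotal t (xs i) = s (xs i) := by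
                intro i
                have h2 := congrFun hts i
                rwa [Function.update_of_ne (hxsne i)] at h2
              refine ⟨b, Assign.supp t y b, ⟨t, ht, b, Set.mem_univ b, rfl⟩, ?_⟩
              refine snoc_tuple_eq_of xs y (Assign.toTotal (Assign.supp t y b))
                (Function.update s y b) (fun i => ?_) ?_
              · rw [Assign.toTotal_supp, Function.update_of_ne (hxsne i),
                  Function.update_of_ne (hxsne i)]
                exact hagree i
              · rw [Assign.toTotal_supp, Function.update_self, Function.update_self]
            · rintro ⟨b, t', ⟨t, ht, a, -, rfl⟩, hts⟩
              obtain ⟨hcs, -⟩ := snoc_tuple_eq' xs y (Assign.toTotal (Assign.supp t y a))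
                (Function.update s y b) hts
              refine ⟨b, t, ht, ?_⟩
              funext i
              rw [Function.update_of_ne (hxsne i)]
              have h2 := hcs i
              rwa [Assign.toTotal_supp, Function.update_of_ne (hxsne i),
                Function.update_of_ne (hxsne i)] at h2
          · rintro s ⟨t, ht, hts⟩ b
            refine ⟨Assign.supp t y b, ⟨t, ht, b, Set.mem_univ b, rfl⟩, ?_⟩
            refine snoc_tuple_eq_of xs y (Assign.toTotal (Assign.supp t y b))
              (Function.update s y b) (fun i => ?_) ?_
            · rw [Assign.toTotal_supp, Function.update_of_ne (hxsne i),
                Function.update_of_ne (hxsne i)]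
              exact congrFun hts i
            · rw [Assign.toTotal_supp, Function.update_self, Function.update_self]
        · rintro ⟨S, hcond, hS, hall⟩
          refine (IH _).2 ((etaSem_congr A φ (n+1) (Fin.snoc xs y) S _ fun s => ?_).1 hS)
          constructor
          · intro hs
            have hrhs : ∃ b, (fun j => Function.update s y b
                ((Fin.snoc xs y : Fin (n+1) → ℕ) j)) ∈ S :=
              ⟨s y, by simpa only [Function.update_eq_self] using hs⟩
            obtain ⟨b, t, ht, hts⟩ := (hcond s).2 hrhs
            have hagree : ∀ i, Assign.toTotal t (xs i) = s (xs i) := by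
              intro i
              have h2 := congrFun hts i
              rwa [Function.update_of_ne (hxsne i)] at h2
            refine ⟨Assign.supp t y (s y), ⟨t, ht, s y, Set.mem_univ _, rfl⟩, ?_⟩
            rw [Assign.toTotal_supp]
            refine snoc_tuple_eq_of xs y (Function.update (Assign.toTotal t) y (s y)) s
              (fun i => ?_) (by rw [Function.update_self])
            rw [Function.update_of_ne (hxsne i)]
            exact hagree i
          · rintro ⟨t', ⟨t, ht, a, -, rfl⟩, hts⟩
            rw [← hts, Assign.toTotal_supp]
            exact hall (Assign.toTotal t) ⟨t, ht, rfl⟩ a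

end Main

/-- For `φ ∈ FO(~,𝒟)`, a tuple `x̄ ⊇ Fr(φ)` and a team `T` with domain
`Y ⊇ x̄`: `(A,T) ⊨ φ` in team semantics iff `A ⊨ η^{x̄}_φ(x̄⟨T⟩)` in classical
second-order semantics. -/
theorem statement5 {τ : Vocab} {D : DepFamily} (A : Struc τ) (φ : TFormula τ D)
    {n : ℕ} (xs : Fin n → ℕ) (hfr : φ.Fr ⊆ Set.range xs)
    {Y : Set ℕ} (hY : Set.range xs ⊆ Y) (T : Team A Y) :
    TSat A φ Y T ↔ etaSem A φ n xs (tupleEval A (fun i => Term.var (xs i)) T) := by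
  have h : tupleEval A (fun i => Term.var (xs i)) T = teamRel T xs := by
    ext v
    simp only [tupleEval, Set.mem_image, teamRel, Set.mem_setOf_eq, Term.eval]
  rw [h]
  exact statement5_core A φ n xs hfr Y hY T
end

section
/- Let 𝒜 be a structure, let T be a team with domain the set X underlying the tuple x̄ = (x_1,…,x_n), let S be a team with domain X ∪ {y} (possibly y ∈ X), and let X' := X ∖ {y}. Then T↾X' = S↾X' if and only if 𝒜 ⊨ π(x̄⟨T⟩, (x̄;y)⟨S⟩), where π(T,S) := ∀x̄ ((∃y T x̄) ↔ (∃y S x̄;y)) and x̄;y denotes x̄ if y occurs in x̄ and (x_1,…,x_n,y) otherwise. -/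
set_option autoImplicit false

open Classical

lemma mem_tupleEval_var {τ : Vocab} (A : Struc τ) {X : Set ℕ} {k : ℕ}
    (zs : Fin k → ℕ) (hz : ∀ i, zs i ∈ X) (T : Team A X) (v : Fin k → A.Dom) :
    v ∈ tupleEval A (fun i => Term.var (zs i)) T ↔
      ∃ t ∈ T, ∀ i, t ⟨zs i, hz i⟩ = v i := by
  constructor
  · rintro ⟨t, ht, rfl⟩
    exact ⟨t, ht, fun i => by simp [Term.eval, Assign.toTotal, hz i]⟩
  · rintro ⟨t, ht, he⟩
    refine ⟨t, ht, ?_⟩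
    funext i
    simp [Term.eval, Assign.toTotal, hz i, he i]

lemma semico_mem {n : ℕ} (xs : Fin n → ℕ) (y : ℕ) :
    ∀ j, (semico xs y).2 j ∈ Set.range xs ∪ {y} := by
  by_cases h : y ∈ Set.range xs
  · have e : semico xs y = ⟨n, xs⟩ := by simp [semico, h]
    rw [e]; intro j; exact Or.inl (Set.mem_range_self j)
  · have e : semico xs y = ⟨n + 1, Fin.snoc xs y⟩ := by simp [semico, h]
    rw [e]; intro j
    refine Fin.lastCases ?_ (fun i => ?_) j
    · exact Or.inr (Fin.snoc_last (α := fun _ => ℕ) y xs)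
    · exact Or.inl ⟨i, (Fin.snoc_castSucc (α := fun _ => ℕ) y xs i).symm⟩

lemma semico_surj {n : ℕ} (xs : Fin n → ℕ) (y : ℕ) :
    ∀ i, ∃ j, (semico xs y).2 j = xs i := by
  by_cases h : y ∈ Set.range xs
  · have e : semico xs y = ⟨n, xs⟩ := by simp [semico, h]
    rw [e]; intro i; exact ⟨i, rfl⟩
  · have e : semico xs y = ⟨n + 1, Fin.snoc xs y⟩ := by simp [semico, h]
    rw [e]; intro i
    exact ⟨i.castSucc, Fin.snoc_castSucc (α := fun _ => ℕ) y xs i⟩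

lemma main_aux {τ : Vocab} (A : Struc τ) {n m : ℕ} (xs : Fin n → ℕ) (y : ℕ)
    (ms : Fin m → ℕ)
    (h1 : ∀ j, ms j ∈ Set.range xs ∪ {y})
    (h2 : ∀ i, ∃ j, ms j = xs i)
    (T : Team A (Set.range xs)) (S : Team A (Set.range xs ∪ {y})) :
    T.restrict (Set.diff_subset : Set.range xs \ {y} ⊆ Set.range xs) =
      S.restrict (Set.diff_subset.trans Set.subset_union_left) ↔
    ∀ s : ℕ → A.Dom,
      (∃ b : A.Dom, (fun i => Function.update s y b (xs i)) ∈
        tupleEval A (fun i => Term.var (xs i)) T) ↔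
      (∃ b : A.Dom, (fun j => Function.update s y b (ms j)) ∈
        tupleEval A (fun j => Term.var (ms j)) S) := by
  have hxX : ∀ i : Fin n, xs i ∈ Set.range xs := fun i => Set.mem_range_self i
  have hyS : y ∈ Set.range xs ∪ {y} := Or.inr rfl
  constructor
  · intro hR s
    constructor
    · rintro ⟨b, hv⟩
      rw [mem_tupleEval_var A xs hxX] at hv
      obtain ⟨t, ht, hti⟩ := hv
      have htr : Assign.restrict (Set.diff_subset : Set.range xs \ {y} ⊆ Set.range xs) t ∈
          S.restrict ((Set.diff_subset.trans Set.subset_union_left :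
            Set.range xs \ {y} ⊆ Set.range xs ∪ {y})) := by
        rw [← hR]; exact Set.mem_image_of_mem _ ht
      obtain ⟨u, hu, hur⟩ := htr
      refine ⟨u ⟨y, hyS⟩, (mem_tupleEval_var A ms h1 S _).2 ⟨u, hu, fun j => ?_⟩⟩
      by_cases hj : ms j = y
      · rw [congrArg u (Subtype.ext hj : (⟨ms j, h1 j⟩ : (Set.range xs ∪ {y} : Set ℕ)) = ⟨y, hyS⟩),
          hj, Function.update_self]
      · have hmsX : ms j ∈ Set.range xs := (h1 j).resolve_right hj
        obtain ⟨i, hi⟩ := (h1 j).resolve_right hj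
        have hmem : ms j ∈ Set.range xs \ {y} := ⟨hmsX, hj⟩
        have h2' : u ⟨ms j, h1 j⟩ = t ⟨ms j, hmsX⟩ := congrFun hur ⟨ms j, hmem⟩
        rw [h2', congrArg t (Subtype.ext hi.symm :
            (⟨ms j, hmsX⟩ : (Set.range xs : Set ℕ)) = ⟨xs i, hxX i⟩),
          hti i, Function.update_of_ne (hi ▸ hj), Function.update_of_ne hj, hi]
    · rintro ⟨b, hv⟩
      rw [mem_tupleEval_var A ms h1] at hv
      obtain ⟨u, hu, huj⟩ := hv
      have hur : Assign.restrict ((Set.diff_subset.trans Set.subset_union_left :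
            Set.range xs \ {y} ⊆ Set.range xs ∪ {y})) u ∈
          T.restrict (Set.diff_subset : Set.range xs \ {y} ⊆ Set.range xs) := by
        rw [hR]; exact Set.mem_image_of_mem _ hu
      obtain ⟨t, ht, htr⟩ := hur
      refine ⟨if hy : y ∈ Set.range xs then t ⟨y, hy⟩ else b,
        (mem_tupleEval_var A xs hxX T _).2 ⟨t, ht, fun i => ?_⟩⟩
      by_cases hi : xs i = y
      · have hy : y ∈ Set.range xs := hi ▸ Set.mem_range_self i
        rw [congrArg t (Subtype.ext hi : (⟨xs i, hxX i⟩ : (Set.range xs : Set ℕ)) = ⟨y, hy⟩),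
          hi, Function.update_self, dif_pos hy]
      · have hmem : xs i ∈ Set.range xs \ {y} := ⟨hxX i, hi⟩
        obtain ⟨j, hj⟩ := h2 i
        have h3 : t ⟨xs i, hxX i⟩ = u ⟨xs i, Or.inl (hxX i)⟩ := congrFun htr ⟨xs i, hmem⟩
        have h4 : u ⟨xs i, Or.inl (hxX i)⟩ = u ⟨ms j, h1 j⟩ :=
          congrArg u (Subtype.ext hj.symm)
        rw [h3, h4, huj j, hj, Function.update_of_ne hi, Function.update_of_ne hi]
  · intro H
    apply Set.eq_of_subset_of_subset
    · rintro r ⟨t, ht, rfl⟩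
      set s : ℕ → A.Dom := fun x =>
        if hx : x ∈ Set.range xs then t ⟨x, hx⟩ else Classical.choice A.nonempty with hs
      set b : A.Dom :=
        if hy : y ∈ Set.range xs then t ⟨y, hy⟩ else Classical.choice A.nonempty with hb
      have hmemT : (fun i => Function.update s y b (xs i)) ∈
          tupleEval A (fun i => Term.var (xs i)) T := by
        refine (mem_tupleEval_var A xs hxX T _).2 ⟨t, ht, fun i => ?_⟩
        by_cases hi : xs i = y
        · have hy : y ∈ Set.range xs := hi ▸ Set.mem_range_self i
          rw [congrArg t (Subtype.ext hi : (⟨xs i, hxX i⟩ : (Set.range xs : Set ℕ)) = ⟨y, hy⟩),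
            hi, Function.update_self, hb, dif_pos hy]
        · rw [Function.update_of_ne hi]
          simp only [hs]
          rw [dif_pos (hxX i)]
      obtain ⟨b', hv'⟩ := (H s).1 ⟨b, hmemT⟩
      obtain ⟨u, hu, huj⟩ := (mem_tupleEval_var A ms h1 S _).1 hv'
      refine ⟨u, hu, ?_⟩
      funext x
      obtain ⟨x, hxr, hxy⟩ := x
      obtain ⟨i, rfl⟩ := hxr
      have hne : xs i ≠ y := hxy
      obtain ⟨j, hj⟩ := h2 i
      show u ⟨xs i, Or.inl (hxX i)⟩ = t ⟨xs i, hxX i⟩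
      have h4 : u ⟨xs i, Or.inl (hxX i)⟩ = u ⟨ms j, h1 j⟩ := congrArg u (Subtype.ext hj.symm)
      rw [h4, huj j, hj, Function.update_of_ne hne]
      simp only [hs]
      rw [dif_pos (hxX i)]
    · rintro r ⟨u, hu, rfl⟩
      set s : ℕ → A.Dom := fun x =>
        if hx : x ∈ Set.range xs ∪ {y} then u ⟨x, hx⟩ else Classical.choice A.nonempty with hs
      have hmemS : (fun j => Function.update s y (u ⟨y, hyS⟩) (ms j)) ∈
          tupleEval A (fun j => Term.var (ms j)) S := by
        refine (mem_tupleEval_var A ms h1 S _).2 ⟨u, hu, fun j => ?_⟩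
        by_cases hj : ms j = y
        · rw [congrArg u (Subtype.ext hj : (⟨ms j, h1 j⟩ : (Set.range xs ∪ {y} : Set ℕ)) = ⟨y, hyS⟩),
            hj, Function.update_self]
        · rw [Function.update_of_ne hj]
          simp only [hs]
          rw [dif_pos (h1 j)]
      obtain ⟨b', hv'⟩ := (H s).2 ⟨u ⟨y, hyS⟩, hmemS⟩
      obtain ⟨t, ht, hti⟩ := (mem_tupleEval_var A xs hxX T _).1 hv'
      refine ⟨t, ht, ?_⟩
      funext x
      obtain ⟨x, hxr, hxy⟩ := x
      obtain ⟨i, rfl⟩ := hxr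
      have hne : xs i ≠ y := hxy
      show t ⟨xs i, hxX i⟩ = u ⟨xs i, Or.inl (hxX i)⟩
      rw [hti i, Function.update_of_ne hne]
      simp only [hs]
      rw [dif_pos (Set.mem_union_left _ (hxX i))]

/-- For a team `T` with domain `X = {x̄}` and a team `S` with domain
`X ∪ {y}`: `T↾X' = S↾X'` (where `X' = X \ {y}`) iff
`A ⊨ π(x̄⟨T⟩, (x̄;y)⟨S⟩)` where `π(T,S) = ∀x̄ ((∃y T x̄) ↔ (∃y S x̄;y))`,
stated here in classical Tarski semantics. -/
theorem statement6 {τ : Vocab} (A : Struc τ) {n : ℕ} (xs : Fin n → ℕ) (y : ℕ)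
    (T : Team A (Set.range xs)) (S : Team A (Set.range xs ∪ {y})) :
    T.restrict (Set.diff_subset : Set.range xs \ {y} ⊆ Set.range xs) =
      S.restrict (Set.diff_subset.trans Set.subset_union_left) ↔
    ∀ s : ℕ → A.Dom,
      (∃ b : A.Dom, (fun i => Function.update s y b (xs i)) ∈
        tupleEval A (fun i => Term.var (xs i)) T) ↔
      (∃ b : A.Dom, (fun j => Function.update s y b ((semico xs y).2 j)) ∈
        tupleEval A (fun j => Term.var ((semico xs y).2 j)) S) :=
  main_aux A xs y (semico xs y).2 (semico_mem xs y) (semico_surj xs y) T S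
end

section
/- In FO(~) under team semantics, for all first-order formulas α_1, …, α_n and β_1, …, β_n, the equivalence ⋁_{i=1}^n (α_i ∧ E β_i) ≡ (⋁_{i=1}^n α_i) ∧ ⋀_{i=1}^n E(α_i ∧ β_i) holds, where ⋁ is the splitting disjunction ∨ iterated over i = 1,…,n. -/
set_option autoImplicit false

open Classical

section Aux

variable {τ : Vocab} {D : DepFamily}

lemma finBigOr_succ {n : ℕ} (χ : Fin (n + 2) → TFormula τ D) :
    finBigOr χ = .tor (χ 0) (finBigOr fun i => χ i.succ) := by
  simp [finBigOr, bigOr, List.ofFn_succ]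

lemma finBigAnd_succ {n : ℕ} (χ : Fin (n + 2) → TFormula τ D) :
    finBigAnd χ = .tand (χ 0) (finBigAnd fun i => χ i.succ) := by
  simp [finBigAnd, bigAnd, List.ofFn_succ]

lemma iUnion_fin_succ {β : Type*} {n : ℕ} (F : Fin (n + 1) → Set β) :
    (⋃ i, F i) = F 0 ∪ ⋃ i : Fin n, F i.succ := by
  ext x
  simp [Fin.exists_fin_succ]

lemma tsat_finBigOr (A : Struc τ) {n : ℕ} (χ : Fin (n + 1) → TFormula τ D)
    (X : Set ℕ) (T : Team A X) :
    TSat A (finBigOr χ) X T ↔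
      ∃ F : Fin (n + 1) → Team A X, (⋃ i, F i) = T ∧ ∀ i, TSat A (χ i) X (F i) := by
  induction n generalizing T with
  | zero =>
    constructor
    · intro h
      exact ⟨fun _ => T, Set.iUnion_const T, fun i => by rw [Fin.fin_one_eq_zero i]; exact h⟩
    · rintro ⟨F, hU, hF⟩
      have : T = F 0 := by
        rw [← hU]; ext x; simp [Fin.exists_fin_one]
      rw [this]; exact hF 0
  | succ n ih =>
    rw [finBigOr_succ]
    simp only [TSat]
    constructor
    · rintro ⟨S, U, hSU, hS, hU⟩
      rcases (ih (fun i => χ i.succ) U).mp hU with ⟨G, hG, hGall⟩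
      refine ⟨Fin.cases S G, ?_, ?_⟩
      · rw [iUnion_fin_succ]
        simp only [Fin.cases_zero, Fin.cases_succ]
        rw [hG, hSU]
      · intro i
        refine Fin.cases ?_ ?_ i
        · exact hS
        · intro j; simpa using hGall j
    · rintro ⟨F, hU, hF⟩
      refine ⟨F 0, ⋃ i : Fin (n + 1), F i.succ, ?_, hF 0, ?_⟩
      · rw [← hU]; exact (iUnion_fin_succ F).symm
      · exact (ih (fun i => χ i.succ) _).mpr ⟨fun i => F i.succ, rfl, fun i => hF i.succ⟩

lemma tsat_finBigAnd (A : Struc τ) {n : ℕ} (χ : Fin (n + 1) → TFormula τ D)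
    (X : Set ℕ) (T : Team A X) :
    TSat A (finBigAnd χ) X T ↔ ∀ i, TSat A (χ i) X T := by
  induction n with
  | zero =>
    constructor
    · intro h i
      rw [Fin.fin_one_eq_zero i]; exact h
    · intro h; exact h 0
  | succ n ih =>
    rw [finBigAnd_succ]
    simp only [TSat]
    constructor
    · rintro ⟨h0, hrest⟩ i
      refine Fin.cases h0 (fun j => ((ih (fun i => χ i.succ)).mp hrest) j) i
    · intro h
      exact ⟨h 0, (ih (fun i => χ i.succ)).mpr fun j => h j.succ⟩

lemma tsat_E (A : Struc τ) (β : FOFormula τ) (X : Set ℕ) (T : Team A X) :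
    TSat A (TFormula.E (D := D) β) X T ↔ ∃ s ∈ T, β.Sat A (Assign.toTotal s) := by
  simp only [TFormula.E, TSat, FOFormula.Sat]
  push_neg
  rfl

end Aux

/-- `⋁_{i=1}^n (α_i ∧ E β_i) ≡ (⋁_{i=1}^n α_i) ∧ ⋀_{i=1}^n E(α_i ∧ β_i)`
for first-order `α_i, β_i` (here with `n+1` formulas each, so that `n ≥ 1`). -/
theorem statement9 {τ : Vocab} {n : ℕ}
    (α β : Fin (n + 1) → FOFormula τ) :
    TEquiv (D := emptyDeps)
      (finBigOr fun i => .tand (.base (α i)) (TFormula.E (β i)))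
      (.tand (finBigOr fun i => .base (α i))
             (finBigAnd fun i => TFormula.E (.and (α i) (β i)))) := by
  intro A X _ T
  constructor
  · intro h
    obtain ⟨F, hU, hF⟩ := (tsat_finBigOr A _ X T).mp h
    have hα : ∀ i, ∀ s ∈ F i, (α i).Sat A s.toTotal := fun i => (hF i).1
    have hβ : ∀ i, ∃ s ∈ F i, (β i).Sat A s.toTotal :=
      fun i => (tsat_E A (β i) X (F i)).mp (hF i).2
    refine ⟨(tsat_finBigOr A _ X T).mpr ⟨F, hU, fun i => hα i⟩, ?_⟩
    refine (tsat_finBigAnd A _ X T).mpr fun i => (tsat_E A _ X T).mpr ?_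
    obtain ⟨s, hsF, hsβ⟩ := hβ i
    refine ⟨s, ?_, hα i s hsF, hsβ⟩
    rw [← hU]; exact Set.mem_iUnion.mpr ⟨i, hsF⟩
  · rintro ⟨h1, h2⟩
    obtain ⟨F, hU, hF⟩ := (tsat_finBigOr A _ X T).mp h1
    have hE : ∀ i, ∃ s ∈ T, ((α i).and (β i)).Sat A s.toTotal :=
      fun i => (tsat_E A _ X T).mp ((tsat_finBigAnd A _ X T).mp h2 i)
    choose w hwT hwαβ using hE
    refine (tsat_finBigOr A _ X T).mpr ⟨fun i => F i ∪ {w i}, ?_, fun i => ?_⟩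
    · rw [← hU]
      apply Set.Subset.antisymm
      · intro x hx
        rcases Set.mem_iUnion.mp hx with ⟨i, hi⟩
        rcases hi with h | h
        · exact Set.mem_iUnion.mpr ⟨i, h⟩
        · rw [hU]
          rcases h with rfl
          exact hwT i
      · intro x hx
        rcases Set.mem_iUnion.mp hx with ⟨i, hi⟩
        exact Set.mem_iUnion.mpr ⟨i, Or.inl hi⟩
    · refine ⟨?_, (tsat_E A _ X _).mpr ⟨w i, Or.inr rfl, (hwαβ i).2⟩⟩
      intro s hs
      rcases hs with h | h
      · exact hF i s h
      · rcases h with rfl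
        exact (hwαβ i).1
end

section
/- In FO(~) under team semantics, the Boolean disjunction ⊻ distributes over the splitting disjunction ∨ from both sides: for all formulas ϑ_1, ϑ_2, ϑ_3 ∈ FO(~), (ϑ_1 ⊻ ϑ_2) ∨ ϑ_3 ≡ (ϑ_1 ∨ ϑ_3) ⊻ (ϑ_2 ∨ ϑ_3) and ϑ_1 ∨ (ϑ_2 ⊻ ϑ_3) ≡ (ϑ_1 ∨ ϑ_2) ⊻ (ϑ_1 ∨ ϑ_3). -/
set_option autoImplicit false

open Classical

/-- The Boolean disjunction distributes over the splitting disjunction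
from both sides, for all `ϑ_1, ϑ_2, ϑ_3 ∈ FO(~)`. -/
theorem statement10 {τ : Vocab} (θ₁ θ₂ θ₃ : TFormula τ emptyDeps) :
    TEquiv (.tor (θ₁.bdis θ₂) θ₃) ((θ₁.tor θ₃).bdis (θ₂.tor θ₃)) ∧
    TEquiv (.tor θ₁ (θ₂.bdis θ₃)) ((θ₁.tor θ₂).bdis (θ₁.tor θ₃)) := by
  have hb : ∀ (φ ψ : TFormula τ emptyDeps) (A : Struc τ) (X : Set ℕ) (T : Team A X),
      TSat A (φ.bdis ψ) X T ↔ (TSat A φ X T ∨ TSat A ψ X T) := by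
    intro φ ψ A X T
    simp only [TFormula.bdis, TSat]
    tauto
  constructor
  · intro A X _ T
    simp only [TSat, TFormula.bdis, not_and_or, not_not]
    constructor
    · rintro ⟨S, U, hSU, hS | hS, hU⟩
      · exact Or.inl ⟨S, U, hSU, hS, hU⟩
      · exact Or.inr ⟨S, U, hSU, hS, hU⟩
    · rintro (⟨S, U, hSU, hS, hU⟩ | ⟨S, U, hSU, hS, hU⟩)
      · exact ⟨S, U, hSU, Or.inl hS, hU⟩
      · exact ⟨S, U, hSU, Or.inr hS, hU⟩
  · intro A X _ T
    simp only [TSat, TFormula.bdis, not_and_or, not_not]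
    constructor
    · rintro ⟨S, U, hSU, hS, hU | hU⟩
      · exact Or.inl ⟨S, U, hSU, hS, hU⟩
      · exact Or.inr ⟨S, U, hSU, hS, hU⟩
    · rintro (⟨S, U, hSU, hS, hU⟩ | ⟨S, U, hSU, hS, hU⟩)
      · exact ⟨S, U, hSU, hS, Or.inl hU⟩
      · exact ⟨S, U, hSU, hS, Or.inr hU⟩
end

section
/- In FO(~) under team semantics, the existential quantifier distributes over the splitting disjunction: for all formulas ϑ_1, ϑ_2 ∈ FO(~) and every variable x, ∃x (ϑ_1 ∨ ϑ_2) ≡ (∃x ϑ_1) ∨ (∃x ϑ_2). -/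
set_option autoImplicit false

open Classical

/-- `∃x (ϑ_1 ∨ ϑ_2) ≡ (∃x ϑ_1) ∨ (∃x ϑ_2)` for all `ϑ_1, ϑ_2 ∈ FO(~)`. -/
theorem statement12 {τ : Vocab} (x : ℕ) (θ₁ θ₂ : TFormula τ emptyDeps) :
    TEquiv (.tex x (θ₁.tor θ₂)) ((TFormula.tex x θ₁).tor (.tex x θ₂)) := by
  intro A X _ T
  constructor
  · rintro ⟨f, hf, S, U, hSU, hS, hU⟩
    refine ⟨{s ∈ T | ∃ a ∈ f s, Assign.supp s x a ∈ S},
            {s ∈ T | ∃ a ∈ f s, Assign.supp s x a ∈ U}, ?_, ?_, ?_⟩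
    · ext s
      simp only [Set.mem_union, Set.mem_setOf_eq]
      constructor
      · rintro (⟨h, _⟩ | ⟨h, _⟩) <;> exact h
      · intro hs
        obtain ⟨a, ha⟩ := hf s hs
        have hm : Assign.supp s x a ∈ S ∪ U := by
          rw [hSU]; exact ⟨s, hs, a, ha, rfl⟩
        rcases hm with h | h
        · exact Or.inl ⟨hs, a, ha, h⟩
        · exact Or.inr ⟨hs, a, ha, h⟩
    · refine ⟨fun s => {a ∈ f s | Assign.supp s x a ∈ S}, ?_, ?_⟩
      · rintro s ⟨_, a, ha, haS⟩; exact ⟨a, ha, haS⟩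
      · have heq : Team.supp {s ∈ T | ∃ a ∈ f s, Assign.supp s x a ∈ S} x
            (fun s => {a ∈ f s | Assign.supp s x a ∈ S}) = S := by
          ext t
          constructor
          · rintro ⟨s, ⟨_, _⟩, a, ⟨_, haS⟩, rfl⟩; exact haS
          · intro ht
            have hm : t ∈ Team.supp T x f := by rw [← hSU]; exact Or.inl ht
            obtain ⟨s, hs, a, ha, rfl⟩ := hm
            exact ⟨s, ⟨hs, a, ha, ht⟩, a, ⟨ha, ht⟩, rfl⟩
        rw [heq]; exact hS
    · refine ⟨fun s => {a ∈ f s | Assign.supp s x a ∈ U}, ?_, ?_⟩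
      · rintro s ⟨_, a, ha, haU⟩; exact ⟨a, ha, haU⟩
      · have heq : Team.supp {s ∈ T | ∃ a ∈ f s, Assign.supp s x a ∈ U} x
            (fun s => {a ∈ f s | Assign.supp s x a ∈ U}) = U := by
          ext t
          constructor
          · rintro ⟨s, ⟨_, _⟩, a, ⟨_, haU⟩, rfl⟩; exact haU
          · intro ht
            have hm : t ∈ Team.supp T x f := by rw [← hSU]; exact Or.inr ht
            obtain ⟨s, hs, a, ha, rfl⟩ := hm
            exact ⟨s, ⟨hs, a, ha, ht⟩, a, ⟨ha, ht⟩, rfl⟩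
        rw [heq]; exact hU
  · rintro ⟨T₁, T₂, hT, ⟨f₁, hf₁, h₁⟩, ⟨f₂, hf₂, h₂⟩⟩
    refine ⟨fun s => {a | (s ∈ T₁ ∧ a ∈ f₁ s) ∨ (s ∈ T₂ ∧ a ∈ f₂ s)}, ?_,
      Team.supp T₁ x f₁, Team.supp T₂ x f₂, ?_, h₁, h₂⟩
    · intro s hs
      rw [← hT] at hs
      rcases hs with hs | hs
      · obtain ⟨a, ha⟩ := hf₁ s hs; exact ⟨a, Or.inl ⟨hs, ha⟩⟩
      · obtain ⟨a, ha⟩ := hf₂ s hs; exact ⟨a, Or.inr ⟨hs, ha⟩⟩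
    · ext t
      constructor
      · rintro (⟨s, hs, a, ha, rfl⟩ | ⟨s, hs, a, ha, rfl⟩)
        · exact ⟨s, by rw [← hT]; exact Or.inl hs, a, Or.inl ⟨hs, ha⟩, rfl⟩
        · exact ⟨s, by rw [← hT]; exact Or.inr hs, a, Or.inr ⟨hs, ha⟩, rfl⟩
      · rintro ⟨s, _, a, (⟨hs, ha⟩ | ⟨hs, ha⟩), rfl⟩
        · exact Or.inl ⟨s, hs, a, ha, rfl⟩
        · exact Or.inr ⟨s, hs, a, ha, rfl⟩
end
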